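/- For every integer n ≥ 2 and all real numbers r > 1 and l with 0 < l < r+1 and l ≠ 1, one has ∫_{t=0}^{1} [ (((1−t)(1−l)+r)^n − r^n)/(1−l) + r^n − 2(r−1)^n + (r+t−1)^n ] dt + ∫_{t=0}^{1} [ ((r+1−l)^n − r^n)/(1−l) + r^n − (r+t−1)^n + ((r+1−l)^n − (r+t(1−l))^n)/(1−l) ] dt = 2·[ (r^n − (r+1−l)^n)/(l−1) + r^n − (r−1)^n ]. -/

import Mathlib

theorem stmt_8 (n : ℕ) (hn : 2 ≤ n) (r l : ℝ) (hr : 1 < r)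
    (hl0 : 0 < l) (hlr : l < r + 1) (hl1 : l ≠ 1) :
    (∫ t in (0:ℝ)..1,
        ((((1 - t) * (1 - l) + r) ^ n - r ^ n) / (1 - l) + r ^ n - 2 * (r - 1) ^ n +
          (r + t - 1) ^ n)) +
      (∫ t in (0:ℝ)..1,
        (((r + 1 - l) ^ n - r ^ n) / (1 - l) + r ^ n - (r + t - 1) ^ n +
          ((r + 1 - l) ^ n - (r + t * (1 - l)) ^ n) / (1 - l))) =
      2 * ((r ^ n - (r + 1 - l) ^ n) / (l - 1) + r ^ n - (r - 1) ^ n) := by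
  set a : ℝ := 1 - l with ha_def
  have ha : a ≠ 0 := sub_ne_zero.mpr (Ne.symm hl1)
  have hn1 : ((n : ℝ) + 1) ≠ 0 := by positivity
  -- antiderivatives
  set F1 : ℝ → ℝ := fun t =>
    -(((1 - t) * a + r) ^ (n + 1)) / (((n : ℝ) + 1) * a ^ 2) +
      (-(r ^ n) / a + r ^ n - 2 * (r - 1) ^ n) * t + (r + t - 1) ^ (n + 1) / ((n : ℝ) + 1)
    with hF1
  set F2 : ℝ → ℝ := fun t =>
    (((r + 1 - l) ^ n - r ^ n) / a + r ^ n + (r + 1 - l) ^ n / a) * t -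
      (r + t - 1) ^ (n + 1) / ((n : ℝ) + 1) -
      (r + t * a) ^ (n + 1) / (((n : ℝ) + 1) * a ^ 2)
    with hF2
  have hd1 : ∀ t : ℝ, HasDerivAt F1
      ((((1 - t) * a + r) ^ n - r ^ n) / a + r ^ n - 2 * (r - 1) ^ n + (r + t - 1) ^ n) t := by
    intro t
    have h1 : HasDerivAt (fun t : ℝ => (1 - t) * a + r) ((0 - 1) * a) t :=
      (((hasDerivAt_const t (1:ℝ)).sub (hasDerivAt_id t)).mul_const a).add_const r
    have h2 : HasDerivAt (fun t : ℝ => r + t - 1) (0 + 1) t :=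
      ((hasDerivAt_const t r).add (hasDerivAt_id t)).sub_const 1
    have h3 := (((h1.pow (n + 1)).div_const (((n : ℝ) + 1) * a ^ 2)).neg).add
      (((hasDerivAt_id t).const_mul (-(r ^ n) / a + r ^ n - 2 * (r - 1) ^ n)))
    have h4 := h3.add ((h2.pow (n + 1)).div_const ((n : ℝ) + 1))
    convert h4 using 1
    · rfl
    · rfl
    · ext x; simp [hF1]; ring
    · push_cast
      field_simp
      ring
  have hd2 : ∀ t : ℝ, HasDerivAt F2
      (((r + 1 - l) ^ n - r ^ n) / a + r ^ n - (r + t - 1) ^ n +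
        ((r + 1 - l) ^ n - (r + t * a) ^ n) / a) t := by
    intro t
    have h2 : HasDerivAt (fun t : ℝ => r + t - 1) (0 + 1) t :=
      ((hasDerivAt_const t r).add (hasDerivAt_id t)).sub_const 1
    have h5 : HasDerivAt (fun t : ℝ => r + t * a) (0 + 1 * a) t :=
      (hasDerivAt_const t r).add ((hasDerivAt_id t).mul_const a)
    have h6 := (((hasDerivAt_id t).const_mul
        (((r + 1 - l) ^ n - r ^ n) / a + r ^ n + (r + 1 - l) ^ n / a)).sub
      ((h2.pow (n + 1)).div_const ((n : ℝ) + 1))).sub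
      ((h5.pow (n + 1)).div_const (((n : ℝ) + 1) * a ^ 2))
    convert h6 using 1
    · rfl
    · rfl
    · rfl
    push_cast
    field_simp
    ring
  have hc1 : Continuous fun t : ℝ =>
      (((1 - t) * a + r) ^ n - r ^ n) / a + r ^ n - 2 * (r - 1) ^ n + (r + t - 1) ^ n := by
    fun_prop
  have hc2 : Continuous fun t : ℝ =>
      ((r + 1 - l) ^ n - r ^ n) / a + r ^ n - (r + t - 1) ^ n +
        ((r + 1 - l) ^ n - (r + t * a) ^ n) / a := by
    fun_prop
  have hI1 : (∫ t in (0:ℝ)..1,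
        ((((1 - t) * a + r) ^ n - r ^ n) / a + r ^ n - 2 * (r - 1) ^ n + (r + t - 1) ^ n))
      = F1 1 - F1 0 :=
    intervalIntegral.integral_eq_sub_of_hasDerivAt (fun t _ => hd1 t)
      (hc1.intervalIntegrable 0 1)
  have hI2 : (∫ t in (0:ℝ)..1,
        (((r + 1 - l) ^ n - r ^ n) / a + r ^ n - (r + t - 1) ^ n +
          ((r + 1 - l) ^ n - (r + t * a) ^ n) / a))
      = F2 1 - F2 0 :=
    intervalIntegral.integral_eq_sub_of_hasDerivAt (fun t _ => hd2 t)
      (hc2.intervalIntegrable 0 1)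
  rw [show (1:ℝ) - l = a from rfl] at *
  rw [hI1, hI2]
  simp only [hF1, hF2]
  have hl1' : l - 1 ≠ 0 := sub_ne_zero.mpr hl1
  have key : (1:ℝ) * a + r = r + 1 - l := by rw [ha_def]; ring
  have key2 : ((1:ℝ) - 1) * a + r = r := by ring
  have key3 : (0:ℝ) * a + r = r := by ring
  field_simp
  ring
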